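/- arXiv:2102.05695 — 5 statements merged into one kernel-verified Lean document; each statement's English description precedes it below -/
import Mathlib

section
/- For random variables X distributed according to P on a finite sample space and any function φ: X → ℝ, and any distribution Q absolutely continuous with respect to P, we have log(E_P[e^{φ(X)}]) ≥ E_Q[φ(X)] − D(Q‖P), where D denotes the Kullback–Leibler divergence. -/
open scoped BigOperators

/-- Donsker–Varadhan variational inequality on a finite sample space. -/
theorem donsker_varadhan {X : Type*} [Fintype X] (P Q : X → ℝ) (φ : X → ℝ)
    (hP0 : ∀ x, 0 ≤ P x) (hP1 : ∑ x, P x = 1)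
    (hQ0 : ∀ x, 0 ≤ Q x) (hQ1 : ∑ x, Q x = 1)
    (hac : ∀ x, P x = 0 → Q x = 0) :
    Real.log (∑ x, P x * Real.exp (φ x)) ≥
      (∑ x, Q x * φ x) - ∑ x, Q x * Real.log (Q x / P x) := by
  set S : ℝ := ∑ x, P x * Real.exp (φ x) with hS
  have hterm0 : ∀ x, 0 ≤ P x * Real.exp (φ x) := fun x =>
    mul_nonneg (hP0 x) (Real.exp_pos _).le
  have hx0 : ∃ x : X, 0 < Q x := by
    by_contra h
    push_neg at h
    have : ∀ x : X, Q x = 0 := fun x => le_antisymm (h x) (hQ0 x)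
    simp [this] at hQ1
  obtain ⟨x0, hx0⟩ := hx0
  have hP0x : 0 < P x0 := by
    rcases (hP0 x0).lt_or_eq with h | h
    · exact h
    · exact absurd (hac x0 h.symm) (ne_of_gt hx0)
  have hSpos : 0 < S := by
    apply Finset.sum_pos' (fun x _ => hterm0 x)
    exact ⟨x0, Finset.mem_univ x0, mul_pos hP0x (Real.exp_pos _)⟩
  rw [ge_iff_le]
  have key : ∀ x : X, Q x * φ x - Q x * Real.log (Q x / P x) ≤
      P x * Real.exp (φ x) / S - Q x + Q x * Real.log S := by
    intro x
    rcases (hQ0 x).lt_or_eq with hQx | hQx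
    · have hPx : 0 < P x := by
        rcases (hP0 x).lt_or_eq with h | h
        · exact h
        · exact absurd (hac x h.symm) (ne_of_gt hQx)
      have ht : 0 < P x * Real.exp (φ x) / (Q x * S) :=
        div_pos (mul_pos hPx (Real.exp_pos _)) (mul_pos hQx hSpos)
      have hlog := Real.log_le_sub_one_of_pos ht
      have hrw : Real.log (P x * Real.exp (φ x) / (Q x * S)) =
          φ x - Real.log (Q x / P x) - Real.log S := by
        rw [Real.log_div (by positivity) (by positivity),
          Real.log_mul (ne_of_gt hPx) (Real.exp_ne_zero _),
          Real.log_mul (ne_of_gt hQx) (ne_of_gt hSpos),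
          Real.log_div (ne_of_gt hQx) (ne_of_gt hPx), Real.log_exp]
        ring
      have h2 := mul_le_mul_of_nonneg_left hlog (hQ0 x)
      rw [hrw] at h2
      have heq : Q x * (P x * Real.exp (φ x) / (Q x * S) - 1) =
          P x * Real.exp (φ x) / S - Q x := by
        field_simp
      nlinarith [h2]
    · have h1 : 0 ≤ P x * Real.exp (φ x) / S := div_nonneg (hterm0 x) hSpos.le
      rw [← hQx]
      simp only [zero_mul, sub_zero, zero_add, add_zero, sub_self]
      linarith
  calc (∑ x, Q x * φ x) - ∑ x, Q x * Real.log (Q x / P x)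
      = ∑ x, (Q x * φ x - Q x * Real.log (Q x / P x)) := by
        rw [Finset.sum_sub_distrib]
    _ ≤ ∑ x, (P x * Real.exp (φ x) / S - Q x + Q x * Real.log S) :=
        Finset.sum_le_sum (fun x _ => key x)
    _ = (∑ x, P x * Real.exp (φ x)) / S - (∑ x, Q x) + (∑ x, Q x) * Real.log S := by
        rw [Finset.sum_add_distrib, Finset.sum_sub_distrib, ← Finset.sum_div,
          ← Finset.sum_mul]
    _ = Real.log S := by
        rw [hQ1, ← hS, div_self (ne_of_gt hSpos)]; ring
end

section
/- Let α > 1 and p, q > 1 with 1/p + 1/q = 1. For joint distributions on finite sets, with S' = (Z'_1,…,Z'_n) i.i.d. from μ' and S = (Z_1,…,Z_n) i.i.d. from μ (with all required positivity of densities), the Rényi divergence satisfies D_α(P_{W'S'} ‖ P_{W'} P_S) ≤ D_{1+(α−1)p}(P_{W'S'} ‖ P_{W'} P_{S'}) + n · D_{1+(α−1)q}(μ'‖μ). -/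
open scoped BigOperators

/-- Rényi divergence of order α between two densities on a finite set. -/
noncomputable def renyiDiv {X : Type*} [Fintype X] (α : ℝ) (p q : X → ℝ) : ℝ :=
  (1 / (α - 1)) * Real.log (∑ x, q x * (p x / q x) ^ α)

private lemma aux_shift {a b : ℝ} (e : ℝ) (ha : 0 < a) (hb : 0 < b) :
    b * (a / b) ^ (1 + e) = a * (a / b) ^ e := by
  rw [Real.rpow_add (div_pos ha hb), Real.rpow_one, ← mul_assoc,
    mul_div_cancel₀ _ hb.ne']

private lemma aux_pow {a t r e : ℝ} (ha : 0 < a) (ht : 0 < t) (hr : 0 < r) :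
    (a ^ (1 / r) * t ^ e) ^ r = a * t ^ (e * r) := by
  rw [Real.mul_rpow (by positivity) (by positivity), ← Real.rpow_mul ha.le,
    ← Real.rpow_mul ht.le, one_div, inv_mul_cancel₀ hr.ne', Real.rpow_one]

private lemma aux_split {α p q a b c : ℝ} (hpq : 1 / p + 1 / q = 1)
    (ha : 0 < a) (hb : 0 < b) (hc : 0 < c) :
    c * (a / c) ^ α =
      (a ^ (1 / p) * (a / b) ^ (α - 1)) * (a ^ (1 / q) * (b / c) ^ (α - 1)) := by
  have h1 : a ^ (1 / p) * a ^ (1 / q) = a := by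
    rw [← Real.rpow_add ha, hpq, Real.rpow_one]
  have h2 : (a / b) ^ (α - 1) * (b / c) ^ (α - 1) = (a / c) ^ (α - 1) := by
    rw [← Real.mul_rpow (by positivity) (by positivity)]
    congr 1
    field_simp
  calc c * (a / c) ^ α = c * (a / c) ^ (1 + (α - 1)) := by norm_num
    _ = a * (a / c) ^ (α - 1) := aux_shift _ ha hc
    _ = (a ^ (1 / p) * a ^ (1 / q)) * ((a / b) ^ (α - 1) * (b / c) ^ (α - 1)) := by
        rw [h1, h2]
    _ = _ := by ring

/-- Hölder decomposition of the Rényi divergence relative to a mismatched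
reference product measure. -/
theorem renyi_holder_decomposition {W Z : Type*} [Fintype W] [Fintype Z]
    (n : ℕ) (α p q : ℝ) (hα : 1 < α) (hp : 1 < p) (hq : 1 < q)
    (hpq : 1 / p + 1 / q = 1)
    (μ μ' : Z → ℝ) (hμ : ∀ z, 0 < μ z) (hμ1 : ∑ z, μ z = 1)
    (hμ' : ∀ z, 0 < μ' z) (hμ'1 : ∑ z, μ' z = 1)
    (P : W × (Fin n → Z) → ℝ) (hP0 : ∀ x, 0 < P x) (hP1 : ∑ x, P x = 1)
    -- S' is i.i.d. from μ' (marginal of the joint on the data is μ'^{⊗n})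
    (hmargS : ∀ s : Fin n → Z, (∑ w, P (w, s)) = ∏ i, μ' (s i)) :
    renyiDiv α P (fun x => (∑ s, P (x.1, s)) * ∏ i, μ (x.2 i)) ≤
      renyiDiv (1 + (α - 1) * p) P
          (fun x => (∑ s, P (x.1, s)) * ∑ w, P (w, x.2)) +
        n * renyiDiv (1 + (α - 1) * q) μ' μ := by
  classical
  have hxne : Nonempty (W × (Fin n → Z)) := by
    by_contra h
    rw [not_nonempty_iff] at h
    simp [Finset.univ_eq_empty] at hP1
  have hWne : Nonempty W := ⟨(Classical.arbitrary (W × (Fin n → Z))).1⟩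
  have hSne : Nonempty (Fin n → Z) := ⟨(Classical.arbitrary (W × (Fin n → Z))).2⟩
  have hα1 : 0 < α - 1 := by linarith
  have hp0 : 0 < p := by linarith
  have hq0 : 0 < q := by linarith
  set Q : W × (Fin n → Z) → ℝ := fun x => (∑ s, P (x.1, s)) * ∏ i, μ (x.2 i) with hQdef
  set R : W × (Fin n → Z) → ℝ := fun x => (∑ s, P (x.1, s)) * ∑ w, P (w, x.2) with hRdef
  have hPw : ∀ w : W, 0 < ∑ s, P (w, s) :=
    fun w => Finset.sum_pos (fun s _ => hP0 _) Finset.univ_nonempty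
  have hPs : ∀ s : Fin n → Z, 0 < ∑ w, P (w, s) :=
    fun s => Finset.sum_pos (fun w _ => hP0 _) Finset.univ_nonempty
  have hQ : ∀ x, 0 < Q x := fun x => mul_pos (hPw _) (Finset.prod_pos fun i _ => hμ _)
  have hR : ∀ x, 0 < R x := fun x => mul_pos (hPw _) (hPs _)
  set f : W × (Fin n → Z) → ℝ := fun x => P x ^ (1/p) * (P x / R x) ^ (α - 1) with hfdef
  set g : W × (Fin n → Z) → ℝ := fun x => P x ^ (1/q) * (R x / Q x) ^ (α - 1) with hgdef
  set T : ℝ := ∑ x, Q x * (P x / Q x) ^ α with hTdef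
  set T1 : ℝ := ∑ x, R x * (P x / R x) ^ (1 + (α - 1) * p) with hT1def
  set T2 : ℝ := ∑ z, μ z * (μ' z / μ z) ^ (1 + (α - 1) * q) with hT2def
  have hT : 0 < T := Finset.sum_pos
    (fun x _ => mul_pos (hQ x) (Real.rpow_pos_of_pos (div_pos (hP0 x) (hQ x)) _))
    Finset.univ_nonempty
  have hT1 : 0 < T1 := Finset.sum_pos
    (fun x _ => mul_pos (hR x) (Real.rpow_pos_of_pos (div_pos (hP0 x) (hR x)) _))
    Finset.univ_nonempty
  have hT2 : 0 < T2 := by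
    have : Nonempty Z := by
      by_contra h
      rw [not_nonempty_iff] at h
      simp [Finset.univ_eq_empty] at hμ1
    exact Finset.sum_pos
      (fun z _ => mul_pos (hμ z) (Real.rpow_pos_of_pos (div_pos (hμ' z) (hμ z)) _))
      Finset.univ_nonempty
  -- the three sum computations
  have hTfg : T = ∑ x, f x * g x := by
    refine Finset.sum_congr rfl fun x _ => ?_
    exact aux_split hpq (hP0 x) (hR x) (hQ x)
  have hfp : ∑ x, f x ^ p = T1 := by
    refine Finset.sum_congr rfl fun x _ => ?_
    rw [hfdef]
    rw [aux_pow (hP0 x) (div_pos (hP0 x) (hR x)) hp0]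
    rw [show (1 : ℝ) + (α - 1) * p = 1 + (α - 1) * p from rfl]
    rw [aux_shift ((α - 1) * p) (hP0 x) (hR x)]
  have hgq : ∑ x, g x ^ q = T2 ^ n := by
    have hRQ : ∀ x : W × (Fin n → Z), R x / Q x = ∏ i, μ' (x.2 i) / μ (x.2 i) := by
      intro x
      rw [hRdef, hQdef]
      simp only
      rw [mul_div_mul_left _ _ (hPw x.1).ne', hmargS, Finset.prod_div_distrib]
    have step1 : ∑ x, g x ^ q =
        ∑ x : W × (Fin n → Z), P x * ∏ i, (μ' (x.2 i) / μ (x.2 i)) ^ ((α - 1) * q) := by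
      refine Finset.sum_congr rfl fun x _ => ?_
      rw [hgdef]
      rw [aux_pow (hP0 x) (div_pos (hR x) (hQ x)) hq0, hRQ]
      congr 1
      rw [Real.finset_prod_rpow _ _ (fun i _ => (div_pos (hμ' _) (hμ _)).le)]
    rw [step1, Fintype.sum_prod_type_right]
    have step2 : ∀ s : Fin n → Z,
        (∑ w, P (w, s) * ∏ i, (μ' (s i) / μ (s i)) ^ ((α - 1) * q)) =
          ∏ i, μ' (s i) * (μ' (s i) / μ (s i)) ^ ((α - 1) * q) := by
      intro s
      rw [← Finset.sum_mul, hmargS, ← Finset.prod_mul_distrib]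
    simp only [step2]
    have hT2' : T2 = ∑ z, μ' z * (μ' z / μ z) ^ ((α - 1) * q) := by
      refine Finset.sum_congr rfl fun z _ => ?_
      exact aux_shift ((α - 1) * q) (hμ' z) (hμ z)
    rw [hT2', Fintype.sum_pow]
  -- Hölder
  have hconj : p.HolderConjugate q := Real.holderConjugate_iff.mpr ⟨hp, by rw [← one_div, ← one_div]; exact hpq⟩
  have holder : T ≤ T1 ^ (1/p) * (T2 ^ n) ^ (1/q) := by
    rw [hTfg, ← hfp, ← hgq]
    exact Real.inner_le_Lp_mul_Lq_of_nonneg Finset.univ hconj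
      (fun x _ => (mul_pos (Real.rpow_pos_of_pos (hP0 x) _)
        (Real.rpow_pos_of_pos (div_pos (hP0 x) (hR x)) _)).le)
      (fun x _ => (mul_pos (Real.rpow_pos_of_pos (hP0 x) _)
        (Real.rpow_pos_of_pos (div_pos (hR x) (hQ x)) _)).le)
  have hT2n : (0:ℝ) < T2 ^ n := pow_pos hT2 n
  have hlog : Real.log T ≤ (1/p) * Real.log T1 + (1/q) * (n * Real.log T2) := by
    calc Real.log T ≤ Real.log (T1 ^ (1/p) * (T2 ^ n) ^ (1/q)) :=
          Real.log_le_log hT holder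
      _ = (1/p) * Real.log T1 + (1/q) * (n * Real.log T2) := by
          rw [Real.log_mul (by positivity) (by positivity), Real.log_rpow hT1,
            Real.log_rpow hT2n, Real.log_pow]
  show (1 / (α - 1)) * Real.log T ≤
      (1 / (1 + (α - 1) * p - 1)) * Real.log T1 +
        n * ((1 / (1 + (α - 1) * q - 1)) * Real.log T2)
  have h2 : (1 / (α - 1)) * Real.log T ≤
      (1 / (α - 1)) * ((1/p) * Real.log T1 + (1/q) * (n * Real.log T2)) :=
    mul_le_mul_of_nonneg_left hlog (by positivity)
  refine h2.trans_eq ?_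
  field_simp
  ring
end

section
/- Let S' = (Z'_1,…,Z'_n) be i.i.d. from μ' on a finite set Z, W a finite hypothesis set, ℓ: W × Z → ℝ a loss, and μ a distribution on Z with L_μ(w) = E_{Z∼μ}[ℓ(w,Z)]. For any Markov kernel P_{W'|S'} with I(W'; S') ≤ r, the generalization error satisfies E[L_μ(W') − (1/n)Σ_i ℓ(W', Z'_i)] ≤ D₂(r/n), where D₂(ρ) = max_{P_{Ŵ|Z'}: I(Ŵ;Z') ≤ ρ} E[L_μ(Ŵ) − ℓ(Ŵ, Z')] with Z' ∼ μ'. -/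
open scoped BigOperators

noncomputable def mutInfo {A B : Type*} [Fintype A] [Fintype B]
    (p : A × B → ℝ) : ℝ :=
  ∑ x : A × B,
    p x * Real.log (p x / ((∑ b, p (x.1, b)) * ∑ a, p (a, x.2)))

noncomputable def D2 {W Z : Type*} [Fintype W] [Fintype Z]
    (μ μ' : Z → ℝ) (ℓ : W → Z → ℝ) (ρ : ℝ) : ℝ :=
  sSup {g : ℝ | ∃ p : W × Z → ℝ, (∀ x, 0 ≤ p x) ∧ (∑ x, p x = 1) ∧
    (∀ z, (∑ w, p (w, z)) = μ' z) ∧ mutInfo p ≤ ρ ∧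
    g = ∑ x : W × Z, p x * ((∑ z, μ z * ℓ x.1 z) - ℓ x.1 x.2)}

lemma gibbs_term {a b : ℝ} (ha : 0 ≤ a) (hb0 : 0 ≤ b) (hab : 0 < a → 0 < b) :
    a - b ≤ a * Real.log (a / b) := by
  rcases eq_or_lt_of_le ha with h | h
  · simp [← h]
    linarith
  · have hb := hab h
    have h1 : Real.log (b / a) ≤ b / a - 1 := Real.log_le_sub_one_of_pos (by positivity)
    have h2 : Real.log (a / b) = -Real.log (b / a) := by
      rw [Real.log_div h.ne' hb.ne', Real.log_div hb.ne' h.ne']; ring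
    have h3 : 1 - b / a ≤ Real.log (a / b) := by rw [h2]; linarith
    have := mul_le_mul_of_nonneg_left h3 h.le
    calc a - b = a * (1 - b / a) := by field_simp
    _ ≤ a * Real.log (a / b) := this

lemma gibbs {ι : Type*} [Fintype ι] (a b : ι → ℝ) (ha : ∀ i, 0 ≤ a i)
    (hb0 : ∀ i, 0 ≤ b i)
    (hab : ∀ i, 0 < a i → 0 < b i) (hs : ∑ i, b i ≤ ∑ i, a i) :
    0 ≤ ∑ i, a i * Real.log (a i / b i) := by
  have h : ∑ i, (a i - b i) ≤ ∑ i, a i * Real.log (a i / b i) :=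
    Finset.sum_le_sum fun i _ => gibbs_term (ha i) (hb0 i) (hab i)
  rw [Finset.sum_sub_distrib] at h
  linarith

/-- Single-letterized rate-distortion bound on the generalization error under
distribution mismatch: for any algorithm (Markov kernel given here by the joint
law q of (W', S') with S' ∼ μ'^{⊗n}) with I(W'; S') ≤ r, the generalization
error is at most D₂(r/n). -/
theorem gen_le_D2 {W Z : Type*} [Fintype W] [Fintype Z]
    (n : ℕ) (hn : 0 < n)
    (μ μ' : Z → ℝ) (hμ0 : ∀ z, 0 ≤ μ z) (hμ1 : ∑ z, μ z = 1)
    (hμ'0 : ∀ z, 0 ≤ μ' z) (hμ'1 : ∑ z, μ' z = 1)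
    (ℓ : W → Z → ℝ) (r : ℝ) (hr : 0 ≤ r)
    (q : W × (Fin n → Z) → ℝ) (hq0 : ∀ x, 0 ≤ q x) (hq1 : ∑ x, q x = 1)
    (hmarg : ∀ s : Fin n → Z, (∑ w, q (w, s)) = ∏ i, μ' (s i))
    (hMI : mutInfo q ≤ r) :
    (∑ x : W × (Fin n → Z), q x *
        ((∑ z, μ z * ℓ x.1 z) - (1 / (n : ℝ)) * ∑ i, ℓ x.1 (x.2 i))) ≤
      D2 μ μ' ℓ (r / n) := by
  classical
  have hnR : (0:ℝ) < n := by exact_mod_cast hn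
  set qW : W → ℝ := fun w => ∑ s, q (w, s) with hqWdef
  set p : Fin n → W × Z → ℝ :=
    fun i x => ∑ s : Fin n → Z, if s i = x.2 then q (x.1, s) else 0 with hpdef
  have hp0 : ∀ i x, 0 ≤ p i x := by
    intro i x
    exact Finset.sum_nonneg fun s _ => by split <;> simp [hq0]
  have hqW0 : ∀ w, 0 ≤ qW w := fun w => Finset.sum_nonneg fun s _ => hq0 _
  -- fiber summation
  have hfiber : ∀ (i : Fin n) (w : W) (F : Z → ℝ),
      ∑ z, p i (w, z) * F z = ∑ s, q (w, s) * F (s i) := by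
    intro i w F
    calc ∑ z, p i (w, z) * F z
        = ∑ z, ∑ s : Fin n → Z, (if s i = z then q (w, s) * F z else 0) := by
          simp [hpdef, Finset.sum_mul, ite_mul]
      _ = ∑ s : Fin n → Z, ∑ z, (if s i = z then q (w, s) * F z else 0) :=
          Finset.sum_comm
      _ = ∑ s, q (w, s) * F (s i) := by simp
  -- marginals of p i
  have hpW : ∀ i w, ∑ z, p i (w, z) = qW w := by
    intro i w
    simpa using hfiber i w fun _ => (1:ℝ)
  have hple : ∀ i w s, q (w, s) ≤ p i (w, s i) := by
    intro i w s
    have := Finset.single_le_sum (f := fun s' : Fin n → Z =>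
      if s' i = s i then q (w, s') else 0)
      (fun s' _ => by split <;> simp [hq0]) (Finset.mem_univ s)
    simpa [hpdef] using this
  have hqle : ∀ w s, q (w, s) ≤ qW w := by
    intro w s
    exact Finset.single_le_sum (f := fun s' => q (w, s')) (fun s' _ => hq0 _)
      (Finset.mem_univ s)
  have hpleZ : ∀ i w z, p i (w, z) ≤ qW w := by
    intro i w z
    rw [← hpW i w]
    exact Finset.single_le_sum (f := fun z' => p i (w, z')) (fun z' _ => hp0 _ _)
      (Finset.mem_univ z)
  -- the Z-marginal of p i is μ'
  have hpZ : ∀ (i : Fin n) (z : Z), ∑ w, p i (w, z) = μ' z := by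
    intro i z
    have h1 : ∑ w, p i (w, z)
        = ∑ s : Fin n → Z, if s i = z then ∏ j, μ' (s j) else 0 := by
      simp only [hpdef]
      rw [Finset.sum_comm]
      refine Finset.sum_congr rfl fun s _ => ?_
      by_cases h : s i = z
      · simp [h, hmarg s]
      · simp [h]
    rw [h1]
    set g : Fin n → Z → ℝ :=
      fun j y => if j = i then (if y = z then μ' y else 0) else μ' y with hgdef
    have h2 : ∀ s : Fin n → Z,
        (if s i = z then ∏ j, μ' (s j) else 0) = ∏ j, g j (s j) := by
      intro s
      by_cases h : s i = z
      · rw [if_pos h]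
        refine Finset.prod_congr rfl fun j _ => ?_
        by_cases hj : j = i
        · subst hj; simp [hgdef, h]
        · simp [hgdef, hj]
      · rw [if_neg h]
        symm
        apply Finset.prod_eq_zero (Finset.mem_univ i)
        simp [hgdef, h]
    calc ∑ s : Fin n → Z, (if s i = z then ∏ j, μ' (s j) else 0)
        = ∑ s : Fin n → Z, ∏ j, g j (s j) := Finset.sum_congr rfl fun s _ => h2 s
      _ = ∏ j, ∑ y, g j y := (Fintype.prod_sum g).symm
      _ = μ' z := by
          rw [Finset.prod_eq_single i (fun j _ hj => by simp [hgdef, hj, hμ'1])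
            (fun h => absurd (Finset.mem_univ i) h)]
          simp [hgdef]
  -- sums of p i
  have hpsum : ∀ i, ∑ x : W × Z, p i x = 1 := by
    intro i
    rw [Fintype.sum_prod_type]
    simp only [hpW]
    rw [hqWdef]
    rw [← Fintype.sum_prod_type]
    exact hq1
  have hqWsum : ∑ w, qW w = 1 := by
    rw [hqWdef, ← Fintype.sum_prod_type]; exact hq1
  -- averaged joint distribution
  set pbar : W × Z → ℝ := fun x => (∑ i, p i x) / n with hpbardef
  have hpbar0 : ∀ x, 0 ≤ pbar x := fun x =>
    div_nonneg (Finset.sum_nonneg fun i _ => hp0 i x) hnR.le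
  have hpbarsum : ∑ x : W × Z, pbar x = 1 := by
    simp only [hpbardef]
    rw [← Finset.sum_div, Finset.sum_comm]
    simp only [hpsum]
    rw [Finset.sum_const, Finset.card_univ, Fintype.card_fin, nsmul_eq_mul, mul_one]
    field_simp
  have hpbarW : ∀ w, ∑ z, pbar (w, z) = qW w := by
    intro w
    simp only [hpbardef]
    rw [← Finset.sum_div, Finset.sum_comm]
    simp only [hpW]
    field_simp
    rw [Finset.sum_const, Finset.card_univ, Fintype.card_fin, nsmul_eq_mul]
  have hpbarZ : ∀ z, ∑ w, pbar (w, z) = μ' z := by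
    intro z
    simp only [hpbardef]
    rw [← Finset.sum_div, Finset.sum_comm]
    simp only [hpZ]
    field_simp
    rw [Finset.sum_const, Finset.card_univ, Fintype.card_fin, nsmul_eq_mul]
  have hpbarle : ∀ i x, p i x / n ≤ pbar x := by
    intro i x
    simp only [hpbardef]
    gcongr
    exact Finset.single_le_sum (f := fun j => p j x) (fun j _ => hp0 j x)
      (Finset.mem_univ i)
  -- single-letter informations
  set K : Fin n → ℝ := fun i =>
    ∑ x : W × Z, p i x * Real.log (p i x / (qW x.1 * μ' x.2)) with hKdef
  -- Step B : n * mutInfo pbar ≤ ∑ i, K i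
  have stepB : (n : ℝ) * mutInfo pbar ≤ ∑ i, K i := by
    have hmib : mutInfo pbar
        = ∑ x : W × Z, pbar x * Real.log (pbar x / (qW x.1 * μ' x.2)) := by
      unfold mutInfo
      refine Finset.sum_congr rfl fun x _ => ?_
      rw [hpbarW x.1, hpbarZ x.2]
    have key : ∀ i : Fin n, 0 ≤ ∑ x : W × Z, p i x * Real.log (p i x / pbar x) := by
      intro i
      refine gibbs _ _ (fun x => hp0 i x) (fun x => hpbar0 x) ?_ ?_
      · intro x hx
        exact lt_of_lt_of_le (div_pos hx hnR) (hpbarle i x)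
      · rw [hpbarsum, hpsum i]
    have hterm : ∀ (i : Fin n) (x : W × Z),
        p i x * Real.log (p i x / (qW x.1 * μ' x.2))
          - p i x * Real.log (pbar x / (qW x.1 * μ' x.2))
        = p i x * Real.log (p i x / pbar x) := by
      intro i x
      rcases eq_or_lt_of_le (hp0 i x) with h | h
      · simp [← h]
      · have hple1 : p i x ≤ qW x.1 := hpleZ i x.1 x.2
        have hqw : 0 < qW x.1 := lt_of_lt_of_le h hple1
        have hle2 : p i x ≤ μ' x.2 := by
          rw [← hpZ i x.2]
          exact Finset.single_le_sum (f := fun w => p i (w, x.2))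
            (fun w _ => hp0 i _) (Finset.mem_univ x.1)
        have hmu : 0 < μ' x.2 := lt_of_lt_of_le h hle2
        have hpb : 0 < pbar x := lt_of_lt_of_le (div_pos h hnR) (hpbarle i x)
        have hc : (qW x.1 * μ' x.2) ≠ 0 := by positivity
        rw [Real.log_div h.ne' hc, Real.log_div hpb.ne' hc,
          Real.log_div h.ne' hpb.ne']
        ring
    have hnp : ∀ x, (n:ℝ) * pbar x = ∑ i, p i x := by
      intro x; simp only [hpbardef]; field_simp
    have expand : (n:ℝ) * mutInfo pbar
        = ∑ i, ∑ x : W × Z, p i x * Real.log (pbar x / (qW x.1 * μ' x.2)) := by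
      rw [hmib, Finset.mul_sum, Finset.sum_comm]
      refine Finset.sum_congr rfl fun x _ => ?_
      rw [← mul_assoc, hnp x, Finset.sum_mul]
    have final : ∑ i, K i - (n:ℝ) * mutInfo pbar
        = ∑ i, ∑ x : W × Z, p i x * Real.log (p i x / pbar x) := by
      rw [expand, ← Finset.sum_sub_distrib]
      refine Finset.sum_congr rfl fun i _ => ?_
      simp only [hKdef]
      rw [← Finset.sum_sub_distrib]
      exact Finset.sum_congr rfl fun x _ => hterm i x
    have hfin : 0 ≤ ∑ i, K i - (n:ℝ) * mutInfo pbar := by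
      rw [final]; exact Finset.sum_nonneg fun i _ => key i
    linarith
  -- Step A : ∑ i, K i ≤ mutInfo q
  have stepA : ∑ i, K i ≤ mutInfo q := by
    have hK2 : ∀ i : Fin n, K i = ∑ x : W × (Fin n → Z),
        q x * Real.log (p i (x.1, x.2 i) / (qW x.1 * μ' (x.2 i))) := by
      intro i
      simp only [hKdef]
      rw [Fintype.sum_prod_type, Fintype.sum_prod_type]
      exact Finset.sum_congr rfl fun w _ =>
        hfiber i w (fun z => Real.log (p i (w, z) / (qW w * μ' z)))
    have hmiq : mutInfo q = ∑ x : W × (Fin n → Z),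
        q x * Real.log (q x / (qW x.1 * ∏ j, μ' (x.2 j))) := by
      unfold mutInfo
      refine Finset.sum_congr rfl fun x _ => ?_
      rw [show (∑ b, q (x.1, b)) = qW x.1 from rfl, hmarg x.2]
    set m : W × (Fin n → Z) → ℝ :=
      fun x => (∏ i, p i (x.1, x.2 i)) / qW x.1 ^ (n-1) with hmdef
    have hm0 : ∀ x, 0 ≤ m x := fun x =>
      div_nonneg (Finset.prod_nonneg fun i _ => hp0 _ _) (pow_nonneg (hqW0 _) _)
    have hmsum : ∑ x : W × (Fin n → Z), m x = 1 := by
      rw [Fintype.sum_prod_type]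
      have hw : ∀ w, ∑ s : Fin n → Z, m (w, s) = qW w := by
        intro w
        have hps : ∑ s : Fin n → Z, ∏ i, p i (w, s i) = qW w ^ n := by
          rw [← Fintype.prod_sum (fun (i : Fin n) (z : Z) => p i (w, z))]
          simp only [hpW]
          rw [Finset.prod_const, Finset.card_univ, Fintype.card_fin]
        simp only [hmdef]
        rw [← Finset.sum_div, hps]
        rcases eq_or_lt_of_le (hqW0 w) with h | h
        · rw [← h, zero_pow hn.ne', zero_div]
        · rw [div_eq_iff (pow_ne_zero _ h.ne'), ← pow_succ']
          congr 1
          omega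
      simp only [hw]
      exact hqWsum
    have hqm : ∀ x, 0 < q x → 0 < m x := by
      intro x hx
      have hqw : 0 < qW x.1 := lt_of_lt_of_le hx (hqle x.1 x.2)
      exact div_pos
        (Finset.prod_pos fun i _ => lt_of_lt_of_le hx (hple i x.1 x.2))
        (by positivity)
    have hterm : ∀ x : W × (Fin n → Z),
        q x * Real.log (q x / (qW x.1 * ∏ j, μ' (x.2 j)))
          - ∑ i, q x * Real.log (p i (x.1, x.2 i) / (qW x.1 * μ' (x.2 i)))
        = q x * Real.log (q x / m x) := by
      intro x
      rcases eq_or_lt_of_le (hq0 x) with h | h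
      · simp [← h]
      · obtain ⟨w, s⟩ := x
        have hqw : 0 < qW w := lt_of_lt_of_le h (hqle w s)
        have hprodmu : 0 < ∏ j, μ' (s j) := by
          refine lt_of_lt_of_le h ?_
          rw [← hmarg s]
          exact Finset.single_le_sum (f := fun w' => q (w', s))
            (fun w' _ => hq0 _) (Finset.mem_univ w)
        have hmu : ∀ j, 0 < μ' (s j) := by
          intro j
          rcases (hμ'0 (s j)).eq_or_lt with hh | hh
          · exact absurd (Finset.prod_eq_zero (Finset.mem_univ j) hh.symm)
              (ne_of_gt hprodmu)
          · exact hh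
        have hpi : ∀ i : Fin n, 0 < p i (w, s i) := fun i =>
          lt_of_lt_of_le h (hple i w s)
        have hprodp : 0 < ∏ i, p i (w, s i) := Finset.prod_pos fun i _ => hpi i
        have hmpos : 0 < m (w, s) := hqm (w, s) h
        have hcast : ((n - 1 : ℕ) : ℝ) = (n:ℝ) - 1 := by
          rw [Nat.cast_sub hn]; simp
        have e1 : Real.log (q (w,s) / (qW w * ∏ j, μ' (s j)))
            = Real.log (q (w,s)) - Real.log (qW w) - ∑ j, Real.log (μ' (s j)) := by
          rw [Real.log_div h.ne' (mul_pos hqw hprodmu).ne', Real.log_mul hqw.ne' hprodmu.ne',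
            Real.log_prod (fun j _ => (hmu j).ne')]
          ring
        have e2 : ∀ i : Fin n, Real.log (p i (w, s i) / (qW w * μ' (s i)))
            = Real.log (p i (w, s i)) - Real.log (qW w) - Real.log (μ' (s i)) := by
          intro i
          rw [Real.log_div (hpi i).ne' (mul_pos hqw (hmu i)).ne', Real.log_mul hqw.ne' (hmu i).ne']
          ring
        have e3 : Real.log (q (w,s) / m (w,s))
            = Real.log (q (w,s)) - ∑ i, Real.log (p i (w, s i))
              + ((n:ℝ) - 1) * Real.log (qW w) := by
          simp only [hmdef]
          rw [Real.log_div h.ne' (ne_of_gt (by simpa [hmdef] using hmpos)),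
            Real.log_div hprodp.ne' (pow_ne_zero _ hqw.ne'),
            Real.log_prod (fun i _ => (hpi i).ne'), Real.log_pow, hcast]
          ring
        simp only
        rw [e1, e3, ← Finset.mul_sum]
        simp only [e2]
        rw [Finset.sum_sub_distrib, Finset.sum_sub_distrib, Finset.sum_const,
          Finset.card_univ, Fintype.card_fin, nsmul_eq_mul]
        ring
    have hgibbs : 0 ≤ ∑ x : W × (Fin n → Z), q x * Real.log (q x / m x) :=
      gibbs q m hq0 hm0 hqm (by rw [hq1, hmsum])
    have hdiff : mutInfo q - ∑ i, K i
        = ∑ x : W × (Fin n → Z), q x * Real.log (q x / m x) := by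
      rw [hmiq]
      simp only [hK2]
      rw [Finset.sum_comm, ← Finset.sum_sub_distrib]
      exact Finset.sum_congr rfl fun x _ => hterm x
    linarith
  have hMIpbar : mutInfo pbar ≤ r / n := by
    rw [le_div_iff₀ hnR, mul_comm]
    exact stepB.trans (stepA.trans hMI)
  -- the generalization error equals the one computed from pbar
  have hgen : (∑ x : W × (Fin n → Z), q x *
        ((∑ z, μ z * ℓ x.1 z) - (1 / (n : ℝ)) * ∑ i, ℓ x.1 (x.2 i)))
      = ∑ x : W × Z, pbar x * ((∑ z, μ z * ℓ x.1 z) - ℓ x.1 x.2) := by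
    have step1 : ∀ i : Fin n,
        ∑ x : W × Z, p i x * ((∑ z, μ z * ℓ x.1 z) - ℓ x.1 x.2)
        = ∑ x : W × (Fin n → Z), q x * ((∑ z, μ z * ℓ x.1 z) - ℓ x.1 (x.2 i)) := by
      intro i
      rw [Fintype.sum_prod_type, Fintype.sum_prod_type]
      exact Finset.sum_congr rfl fun w _ =>
        hfiber i w (fun z => (∑ z', μ z' * ℓ w z') - ℓ w z)
    calc ∑ x : W × (Fin n → Z), q x *
          ((∑ z, μ z * ℓ x.1 z) - (1/(n:ℝ)) * ∑ i, ℓ x.1 (x.2 i))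
        = ∑ x : W × (Fin n → Z),
            (∑ i, q x * ((∑ z, μ z * ℓ x.1 z) - ℓ x.1 (x.2 i))) / n := by
          refine Finset.sum_congr rfl fun x _ => ?_
          rw [← Finset.mul_sum, Finset.sum_sub_distrib, Finset.sum_const,
            Finset.card_univ, Fintype.card_fin, nsmul_eq_mul]
          field_simp
          try tauto
      _ = ∑ i, (∑ x : W × (Fin n → Z),
            q x * ((∑ z, μ z * ℓ x.1 z) - ℓ x.1 (x.2 i))) / n := by
          rw [← Finset.sum_div, ← Finset.sum_div, Finset.sum_comm]
      _ = ∑ i, (∑ x : W × Z, p i x * ((∑ z, μ z * ℓ x.1 z) - ℓ x.1 x.2)) / n :=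
          Finset.sum_congr rfl fun i _ => by rw [step1 i]
      _ = ∑ x : W × Z, pbar x * ((∑ z, μ z * ℓ x.1 z) - ℓ x.1 x.2) := by
          simp only [hpbardef]
          rw [← Finset.sum_div, Finset.sum_comm, Finset.sum_div]
          refine Finset.sum_congr rfl fun x _ => ?_
          rw [← Finset.sum_mul]
          ring
  -- bounded above
  have hne : Nonempty (W × Z) := by
    have h1 : Nonempty (W × (Fin n → Z)) := by
      by_contra h
      rw [not_nonempty_iff] at h
      rw [Finset.univ_eq_empty, Finset.sum_empty] at hq1
      exact absurd hq1 (by norm_num)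
    obtain ⟨w0, s0⟩ := h1
    exact ⟨w0, s0 ⟨0, hn⟩⟩
  have hbdd : BddAbove {g : ℝ | ∃ p : W × Z → ℝ, (∀ x, 0 ≤ p x) ∧ (∑ x, p x = 1) ∧
      (∀ z, (∑ w, p (w, z)) = μ' z) ∧ mutInfo p ≤ r / n ∧
      g = ∑ x : W × Z, p x * ((∑ z, μ z * ℓ x.1 z) - ℓ x.1 x.2)} := by
    haveI := hne
    have hune : (Finset.univ : Finset (W × Z)).Nonempty := Finset.univ_nonempty
    refine ⟨Finset.univ.sup' hune (fun x : W × Z => (∑ z, μ z * ℓ x.1 z) - ℓ x.1 x.2), ?_⟩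
    rintro g ⟨pp, hpp0, hpp1, -, -, rfl⟩
    calc ∑ x : W × Z, pp x * ((∑ z, μ z * ℓ x.1 z) - ℓ x.1 x.2)
        ≤ ∑ x : W × Z, pp x * Finset.univ.sup' hune
            (fun x : W × Z => (∑ z, μ z * ℓ x.1 z) - ℓ x.1 x.2) :=
          Finset.sum_le_sum fun x _ => mul_le_mul_of_nonneg_left
            (Finset.le_sup' (f := fun x : W × Z => (∑ z, μ z * ℓ x.1 z) - ℓ x.1 x.2)
              (Finset.mem_univ x)) (hpp0 x)
      _ = Finset.univ.sup' hune
            (fun x : W × Z => (∑ z, μ z * ℓ x.1 z) - ℓ x.1 x.2) := by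
          rw [← Finset.sum_mul, hpp1, one_mul]
  rw [hgen]
  unfold D2
  exact le_csSup hbdd ⟨pbar, hpbar0, hpbarsum, hpbarZ, hMIpbar, rfl⟩
end

section
/- Consider a rate-distortion problem with X ∼ ζ on a finite set X, a distortion d: X × X̂ → ℝ, and a distribution η on X. Define φ(λ) = sup_{x̂} log E_{X∼η}[e^{λ d(X,x̂)}] for λ ∈ (−b, 0). Then for every r ≥ 0, inf over kernels P_{X̂|X} with I(X̂;X) ≤ r of E[d(X,X̂)] is at least sup_{−b<λ<0} ( (1/λ)[r + D(ζ‖η)] + (1/λ)φ(λ) ). -/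
open scoped BigOperators ENNReal

-- Core Donsker-Varadhan style inequality
theorem rd_core {X Xh : Type*} [Fintype X] [Fintype Xh]
    [Nonempty X] [Nonempty Xh]
    (ζ η : X → ℝ) (hζ1 : ∑ x, ζ x = 1) (hη0 : ∀ x, 0 < η x)
    (d : X → Xh → ℝ) (r : ℝ) (lam : ℝ) (hlam : lam < 0)
    (p : Xh × X → ℝ) (hp0 : ∀ y, 0 ≤ p y) (hp1 : ∑ y, p y = 1)
    (hmarg : ∀ x, (∑ xh, p (xh, x)) = ζ x)
    (hI : (∑ x : Xh × X, p x * Real.log (p x /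
        ((∑ b, p (x.1, b)) * ∑ a, p (a, x.2)))) ≤ r) :
    (1 / lam) * (r + ∑ x, ζ x * Real.log (ζ x / η x)) +
      (1 / lam) * (⨆ xh : Xh, Real.log (∑ x, η x * Real.exp (lam * d x xh)))
      ≤ ∑ y : Xh × X, p y * d y.2 y.1 := by
  set pXh : Xh → ℝ := fun a => ∑ x, p (a, x) with hpXh
  have hpXh0 : ∀ a, 0 ≤ pXh a := fun a => Finset.sum_nonneg fun x _ => hp0 _
  have hpXhsum : ∑ a, pXh a = 1 := by
    rw [← hp1, Fintype.sum_prod_type]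
  have hple : ∀ y : Xh × X, p y ≤ pXh y.1 := by
    intro y
    have := Finset.single_le_sum (f := fun x => p (y.1, x))
      (fun x _ => hp0 _) (Finset.mem_univ y.2)
    simpa using this
  have hpleζ : ∀ y : Xh × X, p y ≤ ζ y.2 := by
    intro y
    rw [← hmarg y.2]
    have := Finset.single_le_sum (f := fun a => p (a, y.2))
      (fun a _ => hp0 _) (Finset.mem_univ y.1)
    simpa using this
  set q : Xh × X → ℝ := fun y => pXh y.1 * η y.2 with hq
  set f : Xh × X → ℝ := fun y => lam * d y.2 y.1 with hf
  set Z : ℝ := ∑ y : Xh × X, q y * Real.exp (f y) with hZ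
  have hq0 : ∀ y, 0 ≤ q y := fun y => mul_nonneg (hpXh0 _) (hη0 _).le
  have hZpos : 0 < Z := by
    obtain ⟨a, ha⟩ : ∃ a, 0 < pXh a := by
      by_contra h
      push_neg at h
      have : ∑ a, pXh a ≤ 0 := Finset.sum_nonpos fun a _ => h a
      linarith
    obtain ⟨x⟩ := ‹Nonempty X›
    refine Finset.sum_pos' (fun y _ => mul_nonneg (hq0 y) (Real.exp_pos _).le)
      ⟨(a, x), Finset.mem_univ _, ?_⟩
    exact mul_pos (mul_pos ha (hη0 x)) (Real.exp_pos _)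
  -- pointwise DV inequality
  have key : ∀ y : Xh × X,
      p y * f y - p y * Real.log (p y / q y) - p y * Real.log Z ≤
        q y * Real.exp (f y) / Z - p y := by
    intro y
    rcases eq_or_lt_of_le (hp0 y) with h | h
    · have h0 : (0:ℝ) ≤ q y * Real.exp (f y) / Z :=
        div_nonneg (mul_nonneg (hq0 y) (Real.exp_pos _).le) hZpos.le
      rw [← h]
      simpa using h0
    · have hqy : 0 < q y := mul_pos (lt_of_lt_of_le h (hple y)) (hη0 _)
      have hlog := Real.log_le_sub_one_of_pos
        (show 0 < q y * Real.exp (f y) / (p y * Z) by positivity)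
      have hexp : Real.log (q y * Real.exp (f y) / (p y * Z)) =
          Real.log (q y) + f y - Real.log (p y) - Real.log Z := by
        rw [Real.log_div (by positivity) (by positivity),
          Real.log_mul hqy.ne' (Real.exp_pos _).ne',
          Real.log_mul h.ne' hZpos.ne', Real.log_exp]
        ring
      rw [hexp] at hlog
      have hpq : Real.log (p y / q y) = Real.log (p y) - Real.log (q y) :=
        Real.log_div h.ne' hqy.ne'
      have h2 : f y - Real.log (p y / q y) - Real.log Z ≤
          q y * Real.exp (f y) / (p y * Z) - 1 := by
        rw [hpq]; linarith
      have h3 := mul_le_mul_of_nonneg_left h2 h.le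
      have h4 : p y * (q y * Real.exp (f y) / (p y * Z) - 1) =
          q y * Real.exp (f y) / Z - p y := by
        field_simp
      calc p y * f y - p y * Real.log (p y / q y) - p y * Real.log Z
          = p y * (f y - Real.log (p y / q y) - Real.log Z) := by ring
        _ ≤ p y * (q y * Real.exp (f y) / (p y * Z) - 1) := h3
        _ = q y * Real.exp (f y) / Z - p y := h4
  have hsum := Finset.sum_le_sum (fun y (_ : y ∈ Finset.univ) => key y)
  have h1 : ∑ y : Xh × X, (p y * f y - p y * Real.log (p y / q y)
      - p y * Real.log Z) =
      (∑ y : Xh × X, p y * f y) - (∑ y : Xh × X, p y * Real.log (p y / q y))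
        - Real.log Z := by
    rw [Finset.sum_sub_distrib, Finset.sum_sub_distrib, ← Finset.sum_mul, hp1,
      one_mul]
  have h2 : ∑ y : Xh × X, (q y * Real.exp (f y) / Z - p y) = 0 := by
    rw [Finset.sum_sub_distrib, ← Finset.sum_div, ← hZ, div_self hZpos.ne', hp1]
    ring
  rw [h1, h2] at hsum
  -- decompose the relative entropy
  have hident : ∑ y : Xh × X, p y * Real.log (p y / q y) =
      (∑ x : Xh × X, p x * Real.log (p x /
        ((∑ b, p (x.1, b)) * ∑ a, p (a, x.2)))) +
      ∑ x, ζ x * Real.log (ζ x / η x) := by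
    have hterm : ∀ y : Xh × X, p y * Real.log (p y / q y) =
        p y * Real.log (p y / (pXh y.1 * ζ y.2)) +
          p y * Real.log (ζ y.2 / η y.2) := by
      intro y
      rcases eq_or_lt_of_le (hp0 y) with h | h
      · rw [← h]; ring
      · have hpa : 0 < pXh y.1 := lt_of_lt_of_le h (hple y)
        have hzx : 0 < ζ y.2 := lt_of_lt_of_le h (hpleζ y)
        have hex := hη0 y.2
        rw [show q y = pXh y.1 * η y.2 from rfl,
          Real.log_div h.ne' (by positivity),
          Real.log_div h.ne' (by positivity),
          Real.log_div hzx.ne' hex.ne',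
          Real.log_mul hpa.ne' hex.ne', Real.log_mul hpa.ne' hzx.ne']
        ring
    rw [Finset.sum_congr rfl (fun y _ => hterm y), Finset.sum_add_distrib]
    congr 1
    · apply Finset.sum_congr rfl
      intro y _
      rw [hmarg y.2]
    · rw [Fintype.sum_prod_type, Finset.sum_comm]
      refine Finset.sum_congr rfl fun x _ => ?_
      have hh : ∑ x1 : Xh, p (x1, x) * Real.log (ζ x / η x) =
          ζ x * Real.log (ζ x / η x) := by
        rw [← Finset.sum_mul, hmarg]
      simpa using hh
  -- bound log Z by φ
  set g : Xh → ℝ := fun a => ∑ x, η x * Real.exp (lam * d x a) with hg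
  have hgpos : ∀ a, 0 < g a := fun a =>
    Finset.sum_pos (fun x _ => mul_pos (hη0 x) (Real.exp_pos _))
      Finset.univ_nonempty
  set φ : ℝ := ⨆ xh : Xh, Real.log (g xh) with hφ
  have hgφ : ∀ a, g a ≤ Real.exp φ := by
    intro a
    have h1 : Real.log (g a) ≤ φ :=
      le_ciSup (f := fun xh : Xh => Real.log (g xh))
        (Set.Finite.bddAbove (Set.finite_range _)) a
    calc g a = Real.exp (Real.log (g a)) := (Real.exp_log (hgpos a)).symm
      _ ≤ Real.exp φ := Real.exp_le_exp.mpr h1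
  have hZrw : Z = ∑ a, pXh a * g a := by
    simp only [hZ, hq, hf, hg, Finset.mul_sum, Fintype.sum_prod_type]
    exact Finset.sum_congr rfl fun a _ => Finset.sum_congr rfl fun x _ => by
      ring
  have hZle : Z ≤ Real.exp φ := by
    rw [hZrw]
    calc ∑ a, pXh a * g a ≤ ∑ a, pXh a * Real.exp φ :=
          Finset.sum_le_sum fun a _ =>
            mul_le_mul_of_nonneg_left (hgφ a) (hpXh0 a)
      _ = Real.exp φ := by rw [← Finset.sum_mul, hpXhsum, one_mul]
  have hlogZ : Real.log Z ≤ φ := by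
    calc Real.log Z ≤ Real.log (Real.exp φ) :=
          Real.log_le_log hZpos hZle
      _ = φ := Real.log_exp φ
  -- assemble
  set E : ℝ := ∑ y : Xh × X, p y * d y.2 y.1 with hE
  have hEf : ∑ y : Xh × X, p y * f y = lam * E := by
    simp only [hE, hf, Finset.mul_sum]
    exact Finset.sum_congr rfl fun y _ => by ring
  set KL : ℝ := ∑ x, ζ x * Real.log (ζ x / η x) with hKL
  have hmain : lam * E ≤ r + KL + φ := by
    rw [← hEf]
    calc ∑ y : Xh × X, p y * f y
        ≤ (∑ y : Xh × X, p y * Real.log (p y / q y)) + Real.log Z := by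
          linarith
      _ ≤ (r + KL) + φ := by
          rw [hident]
          have := hlogZ
          linarith
      _ = r + KL + φ := by ring
  have hlamne : lam ≠ 0 := hlam.ne
  have hdiv : (r + KL + φ) / lam ≤ E := by
    rw [div_le_iff_of_neg hlam]
    nlinarith [hmain]
  calc (1 / lam) * (r + KL) + (1 / lam) * φ = (r + KL + φ) / lam := by
        field_simp
    _ ≤ E := hdiv

/-- Lower bound on a generic rate-distortion function via a change of measure
(Theorem 3 of the paper).  Here ζ is the source distribution, η an auxiliary
distribution, d the distortion, b ∈ (0,∞] and
φ(λ) = sup_{x̂} log E_{X∼η}[e^{λ d(X,x̂)}]. -/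
theorem rate_distortion_lower_bound {X Xh : Type*} [Fintype X] [Fintype Xh]
    [Nonempty X] [Nonempty Xh]
    (ζ η : X → ℝ) (hζ0 : ∀ x, 0 ≤ ζ x) (hζ1 : ∑ x, ζ x = 1)
    (hη0 : ∀ x, 0 < η x) (hη1 : ∑ x, η x = 1)
    (d : X → Xh → ℝ) (b : ℝ≥0∞) (hb : 0 < b) (r : ℝ) (hr : 0 ≤ r) :
    sInf {v : ℝ | ∃ p : Xh × X → ℝ, (∀ y, 0 ≤ p y) ∧ (∑ y, p y = 1) ∧
        (∀ x, (∑ xh, p (xh, x)) = ζ x) ∧ mutInfo p ≤ r ∧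
        v = ∑ y : Xh × X, p y * d y.2 y.1} ≥
      sSup {v : ℝ | ∃ lam : ℝ, lam < 0 ∧ ENNReal.ofReal (-lam) < b ∧
        v = (1 / lam) * (r + ∑ x, ζ x * Real.log (ζ x / η x)) +
          (1 / lam) * ⨆ xh : Xh,
            Real.log (∑ x, η x * Real.exp (lam * d x xh))} := by
  -- a feasible kernel: the product distribution
  set c : ℝ := (Fintype.card Xh : ℝ) with hc
  have hcpos : 0 < c := by
    simpa [hc] using (Nat.cast_pos.mpr Fintype.card_pos : (0:ℝ) < Fintype.card Xh)
  set p0 : Xh × X → ℝ := fun y => ζ y.2 / c with hp0def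
  have hp00 : ∀ y, 0 ≤ p0 y := fun y => div_nonneg (hζ0 _) hcpos.le
  have hcol : ∀ a : Xh, ∑ x, p0 (a, x) = 1 / c := by
    intro a
    simp only [hp0def]
    rw [← Finset.sum_div, hζ1]
  have hp01 : ∑ y, p0 y = 1 := by
    rw [Fintype.sum_prod_type]
    rw [Finset.sum_congr rfl fun a _ => hcol a]
    rw [Finset.sum_const, Finset.card_univ, nsmul_eq_mul]
    field_simp
    exact hc.symm
  have hp0marg : ∀ x, (∑ xh, p0 (xh, x)) = ζ x := by
    intro x
    simp only [hp0def]
    rw [← Finset.sum_div]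
    rw [Finset.sum_const, Finset.card_univ, nsmul_eq_mul]
    field_simp
    rw [hc]; ring
  have hp0I : mutInfo p0 = 0 := by
    rw [mutInfo]
    apply Finset.sum_eq_zero
    intro y _
    rcases eq_or_lt_of_le (hζ0 y.2) with h | h
    · have : p0 y = 0 := by simp [hp0def, ← h]
      rw [this, zero_mul]
    · have hm1 : (∑ b, p0 (y.1, b)) = 1 / c := hcol y.1
      have hm2 : (∑ a, p0 (a, y.2)) = ζ y.2 := hp0marg y.2
      rw [hm1, hm2]
      have hne : p0 y ≠ 0 := by
        simp only [hp0def]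
        positivity
      have : p0 y / (1 / c * ζ y.2) = 1 := by
        rw [hp0def]
        field_simp
      rw [this, Real.log_one, mul_zero]
  have hSne : {v : ℝ | ∃ p : Xh × X → ℝ, (∀ y, 0 ≤ p y) ∧ (∑ y, p y = 1) ∧
      (∀ x, (∑ xh, p (xh, x)) = ζ x) ∧ mutInfo p ≤ r ∧
      v = ∑ y : Xh × X, p y * d y.2 y.1}.Nonempty :=
    ⟨∑ y : Xh × X, p0 y * d y.2 y.1, p0, hp00, hp01, hp0marg, by rw [hp0I]; exact hr, rfl⟩
  -- the dual set is nonempty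
  obtain ⟨e, he0, heb⟩ := exists_between hb
  have heT : e ≠ ⊤ := (heb.trans_le le_top).ne
  have het : 0 < e.toReal := ENNReal.toReal_pos he0.ne' heT
  have hTne : {v : ℝ | ∃ lam : ℝ, lam < 0 ∧ ENNReal.ofReal (-lam) < b ∧
      v = (1 / lam) * (r + ∑ x, ζ x * Real.log (ζ x / η x)) +
        (1 / lam) * ⨆ xh : Xh,
          Real.log (∑ x, η x * Real.exp (lam * d x xh))}.Nonempty := by
    refine ⟨_, -e.toReal, by linarith, ?_, rfl⟩
    rw [neg_neg, ENNReal.ofReal_toReal heT]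
    exact heb
  rw [ge_iff_le]
  apply csSup_le hTne
  rintro v ⟨lam, hlam, hlamb, rfl⟩
  apply le_csInf hSne
  rintro s ⟨p, hp0, hp1, hmarg, hI, rfl⟩
  exact rd_core ζ η hζ1 hη0 d r lam hlam p hp0 hp1 hmarg (by rw [mutInfo] at hI; exact hI)
end

section
/- Let S' = (Z'_1,…,Z'_n) be i.i.d. from μ on a finite set, let ℓ(w,Z) be σ²-subgaussian under Z ∼ μ for all w ∈ W, and let W' = A(S') be the output of any Markov kernel. Then E[L_μ(W') − (1/n)Σ_i ℓ(W',Z'_i)] ≤ √( (2σ²/n) I(S'; W') ). -/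
open scoped BigOperators

lemma dv_ineq {X : Type*} [Fintype X] (q p : X → ℝ)
    (hq0 : ∀ x, 0 ≤ q x) (hq1 : ∑ x, q x = 1)
    (hp0 : ∀ x, 0 ≤ p x)
    (hac : ∀ x, 0 < q x → 0 < p x) (g : X → ℝ) :
    ∑ x, q x * g x ≤ (∑ x, q x * Real.log (q x / p x)) +
      Real.log (∑ x, p x * Real.exp (g x)) := by
  set M : ℝ := ∑ x, p x * Real.exp (g x) with hM
  have hMpos : 0 < M := by
    obtain ⟨x0, hx0⟩ : ∃ x, 0 < q x := by
      by_contra h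
      push_neg at h
      have : ∀ x, q x = 0 := fun x => le_antisymm (h x) (hq0 x)
      simp [this] at hq1
    refine Finset.sum_pos' (fun x _ => mul_nonneg (hp0 x) (Real.exp_pos _).le)
      ⟨x0, Finset.mem_univ x0, ?_⟩
    have := hac x0 hx0
    positivity
  have key : ∀ x, q x * g x - q x * Real.log (q x / p x) ≤
      p x * Real.exp (g x) / M - q x + q x * Real.log M := by
    intro x
    rcases eq_or_lt_of_le (hq0 x) with h0 | hqpos
    · have hp := hp0 x
      rw [← h0]
      have : 0 ≤ p x * Real.exp (g x) / M := by positivity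
      simpa using this
    · have hppos : 0 < p x := hac x hqpos
      have hlog : Real.log (p x * Real.exp (g x) / (q x * M)) ≤
          p x * Real.exp (g x) / (q x * M) - 1 :=
        Real.log_le_sub_one_of_pos (by positivity)
      have hexp : 0 < Real.exp (g x) := Real.exp_pos _
      have expand : Real.log (p x * Real.exp (g x) / (q x * M)) =
          Real.log (p x) + g x - Real.log (q x) - Real.log M := by
        rw [Real.log_div (by positivity) (by positivity),
          Real.log_mul (ne_of_gt hppos) (ne_of_gt hexp),
          Real.log_mul (ne_of_gt hqpos) (ne_of_gt hMpos), Real.log_exp]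
        ring
      have hqlog : Real.log (q x / p x) = Real.log (q x) - Real.log (p x) :=
        Real.log_div (ne_of_gt hqpos) (ne_of_gt hppos)
      have h2 : q x * (Real.log (p x) + g x - Real.log (q x) - Real.log M) ≤
          q x * (p x * Real.exp (g x) / (q x * M) - 1) := by
        rw [← expand]
        exact mul_le_mul_of_nonneg_left hlog (le_of_lt hqpos)
      have h3 : q x * (p x * Real.exp (g x) / (q x * M) - 1) =
          p x * Real.exp (g x) / M - q x := by
        field_simp
      rw [h3] at h2
      nlinarith [h2]
  have hsum : ∑ x, (q x * g x - q x * Real.log (q x / p x)) ≤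
      ∑ x, (p x * Real.exp (g x) / M - q x + q x * Real.log M) :=
    Finset.sum_le_sum (fun x _ => key x)
  have hrhs : ∑ x, (p x * Real.exp (g x) / M - q x + q x * Real.log M) = Real.log M := by
    rw [Finset.sum_add_distrib, Finset.sum_sub_distrib, ← Finset.sum_div, ← hM,
      div_self (ne_of_gt hMpos), hq1, ← Finset.sum_mul, hq1]
    ring
  rw [Finset.sum_sub_distrib, hrhs] at hsum
  linarith

lemma mgf_prod {W Z : Type*} [Fintype W] [Fintype Z]
    (n : ℕ) (μ : Z → ℝ) (hμ0 : ∀ z, 0 ≤ μ z)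
    (ℓ : W → Z → ℝ) (σ2 : ℝ)
    (hsub : ∀ w, ∀ s : ℝ,
      (∑ z, μ z * Real.exp (s * (ℓ w z - ∑ z', μ z' * ℓ w z'))) ≤
        Real.exp (σ2 * s ^ 2 / 2))
    (w : W) (t : ℝ) :
    ∑ s : Fin n → Z, (∏ i, μ (s i)) *
        Real.exp (∑ i, t * ((∑ z', μ z' * ℓ w z') - ℓ w (s i))) ≤
      Real.exp ((n : ℝ) * (σ2 * t ^ 2 / 2)) := by
  have step : ∑ s : Fin n → Z, (∏ i, μ (s i)) *
        Real.exp (∑ i, t * ((∑ z', μ z' * ℓ w z') - ℓ w (s i))) =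
      ∏ _i : Fin n, ∑ z, μ z * Real.exp (t * ((∑ z', μ z' * ℓ w z') - ℓ w z)) := by
    rw [Finset.prod_univ_sum, Fintype.piFinset_univ]
    refine Finset.sum_congr rfl (fun s _ => ?_)
    rw [Real.exp_sum, ← Finset.prod_mul_distrib]
  have hb := hsub w (-t)
  rw [neg_sq] at hb
  have hb' : ∑ z, μ z * Real.exp (t * ((∑ z', μ z' * ℓ w z') - ℓ w z)) ≤
      Real.exp (σ2 * t ^ 2 / 2) := by
    refine le_trans (le_of_eq (Finset.sum_congr rfl (fun z _ => ?_))) hb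
    exact congrArg (fun u => μ z * Real.exp u) (by ring)
  rw [step, Finset.prod_const, Finset.card_univ, Fintype.card_fin, Real.exp_nat_mul]
  exact pow_le_pow_left₀ (Finset.sum_nonneg fun z _ =>
    mul_nonneg (hμ0 z) (Real.exp_pos _).le) hb' n

/-- Xu–Raginsky bound (no mismatch): gen ≤ √((2σ²/n) I(S';W')). -/
theorem xu_raginsky {W Z : Type*} [Fintype W] [Fintype Z]
    (n : ℕ) (hn : 0 < n)
    (μ : Z → ℝ) (hμ0 : ∀ z, 0 ≤ μ z) (hμ1 : ∑ z, μ z = 1)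
    (ℓ : W → Z → ℝ) (σ2 : ℝ) (hσ : 0 < σ2)
    (hsub : ∀ w, ∀ s : ℝ,
      (∑ z, μ z * Real.exp (s * (ℓ w z - ∑ z', μ z' * ℓ w z'))) ≤
        Real.exp (σ2 * s ^ 2 / 2))
    (q : W × (Fin n → Z) → ℝ) (hq0 : ∀ x, 0 ≤ q x) (hq1 : ∑ x, q x = 1)
    (hmarg : ∀ s : Fin n → Z, (∑ w, q (w, s)) = ∏ i, μ (s i)) :
    (∑ x : W × (Fin n → Z), q x *
        ((∑ z, μ z * ℓ x.1 z) - (1 / (n : ℝ)) * ∑ i, ℓ x.1 (x.2 i))) ≤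
      Real.sqrt ((2 * σ2 / (n : ℝ)) * mutInfo q) := by
  have hn' : (0:ℝ) < (n:ℝ) := Nat.cast_pos.mpr hn
  set G : ℝ := ∑ x : W × (Fin n → Z), q x *
      ((∑ z, μ z * ℓ x.1 z) - (1 / (n : ℝ)) * ∑ i, ℓ x.1 (x.2 i)) with hGdef
  have hnne : (n:ℝ) ≠ 0 := ne_of_gt hn'
  set t : ℝ := G / σ2 with ht
  set p : W × (Fin n → Z) → ℝ :=
    fun x => (∑ s, q (x.1, s)) * (∑ w, q (w, x.2)) with hp
  set g : W × (Fin n → Z) → ℝ :=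
    fun x => ∑ i, t * ((∑ z', μ z' * ℓ x.1 z') - ℓ x.1 (x.2 i)) with hg
  have hsumq1 : ∑ w : W, ∑ s : Fin n → Z, q (w, s) = 1 := by
    rw [← Fintype.sum_prod_type]; exact hq1
  have hsumq2 : ∑ s : Fin n → Z, ∑ w : W, q (w, s) = 1 := by
    rw [Finset.sum_comm]; exact hsumq1
  have hp0 : ∀ x, 0 ≤ p x := fun x =>
    mul_nonneg (Finset.sum_nonneg fun s _ => hq0 _) (Finset.sum_nonneg fun w _ => hq0 _)
  have hac : ∀ x, 0 < q x → 0 < p x := by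
    rintro ⟨w, s⟩ hx
    have h1 : q (w, s) ≤ ∑ s', q (w, s') :=
      Finset.single_le_sum (fun s' _ => hq0 _) (Finset.mem_univ s)
    have h2 : q (w, s) ≤ ∑ w', q (w', s) :=
      Finset.single_le_sum (f := fun w' => q (w', s)) (fun w' _ => hq0 _) (Finset.mem_univ w)
    exact mul_pos (lt_of_lt_of_le hx h1) (lt_of_lt_of_le hx h2)
  have hdv := dv_ineq q p hq0 hq1 hp0 hac g
  -- identify KL term with mutInfo
  have hKL : (∑ x, q x * Real.log (q x / p x)) = mutInfo q := rfl
  -- bound the log-MGF term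
  have hmgf : ∑ x, p x * Real.exp (g x) ≤ Real.exp ((n : ℝ) * (σ2 * t ^ 2 / 2)) := by
    rw [Fintype.sum_prod_type]
    have inner : ∀ w : W, ∑ s : Fin n → Z, p (w, s) * Real.exp (g (w, s)) ≤
        (∑ s', q (w, s')) * Real.exp ((n : ℝ) * (σ2 * t ^ 2 / 2)) := by
      intro w
      have : ∀ s : Fin n → Z, p (w, s) * Real.exp (g (w, s)) =
          (∑ s', q (w, s')) * ((∏ i, μ (s i)) * Real.exp (g (w, s))) := by
        intro s
        simp only [hp]
        rw [hmarg s]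
        ring
      rw [Finset.sum_congr rfl (fun s _ => this s), ← Finset.mul_sum]
      exact mul_le_mul_of_nonneg_left
        (mgf_prod n μ hμ0 ℓ σ2 hsub w t) (Finset.sum_nonneg fun s _ => hq0 _)
    calc ∑ w : W, ∑ s : Fin n → Z, p (w, s) * Real.exp (g (w, s))
        ≤ ∑ w : W, (∑ s', q (w, s')) * Real.exp ((n : ℝ) * (σ2 * t ^ 2 / 2)) :=
          Finset.sum_le_sum fun w _ => inner w
      _ = Real.exp ((n : ℝ) * (σ2 * t ^ 2 / 2)) := by
          rw [← Finset.sum_mul, hsumq1, one_mul]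
  have hMpos : 0 < ∑ x, p x * Real.exp (g x) := by
    obtain ⟨x0, hx0⟩ : ∃ x, 0 < q x := by
      by_contra h
      push_neg at h
      have : ∀ x, q x = 0 := fun x => le_antisymm (h x) (hq0 x)
      simp [this] at hq1
    refine Finset.sum_pos' (fun x _ => mul_nonneg (hp0 x) (Real.exp_pos _).le)
      ⟨x0, Finset.mem_univ x0, ?_⟩
    have := hac x0 hx0
    positivity
  have hlog : Real.log (∑ x, p x * Real.exp (g x)) ≤ (n : ℝ) * (σ2 * t ^ 2 / 2) := by
    rw [Real.log_le_iff_le_exp hMpos]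
    exact hmgf
  -- LHS of DV equals n * t * G
  have hlhs : ∑ x, q x * g x = (n : ℝ) * t * G := by
    rw [hGdef, Finset.mul_sum]
    refine Finset.sum_congr rfl fun x _ => ?_
    simp only [hg, mul_sub, Finset.sum_sub_distrib, Finset.sum_const, Finset.card_univ,
      Fintype.card_fin, nsmul_eq_mul, ← Finset.mul_sum]
    field_simp
  have hmain : (n : ℝ) * t * G ≤ mutInfo q + (n : ℝ) * (σ2 * t ^ 2 / 2) := by
    calc (n : ℝ) * t * G = ∑ x, q x * g x := hlhs.symm
      _ ≤ mutInfo q + Real.log (∑ x, p x * Real.exp (g x)) := by rw [← hKL]; exact hdv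
      _ ≤ mutInfo q + (n : ℝ) * (σ2 * t ^ 2 / 2) := by linarith
  -- conclude
  have hGsq : G ^ 2 ≤ (2 * σ2 / (n : ℝ)) * mutInfo q := by
    rw [ht] at hmain
    have h1 : (n : ℝ) * (G / σ2) * G = (n : ℝ) * G ^ 2 / σ2 := by
      field_simp
    have h2 : (n : ℝ) * (σ2 * (G / σ2) ^ 2 / 2) = (n : ℝ) * G ^ 2 / (2 * σ2) := by
      field_simp
    rw [h1, h2] at hmain
    have h3 : (n : ℝ) * G ^ 2 / σ2 = 2 * ((n : ℝ) * G ^ 2 / (2 * σ2)) := by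
      field_simp
    have h4 : (n : ℝ) * G ^ 2 / (2 * σ2) ≤ mutInfo q := by linarith
    rw [div_le_iff₀ (by positivity : (0:ℝ) < 2 * σ2)] at h4
    rw [div_mul_eq_mul_div, le_div_iff₀ hn']
    nlinarith [h4]
  exact Real.le_sqrt_of_sq_le hGsq
end
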